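/- arXiv:2201.00980 — 5 statements merged into one kernel-verified Lean document; each statement's English description precedes it below -/
import Mathlib

section
/- Let X be a d-dimensional vector space over ℂ, τ_1,…,τ_n ∈ X, f_1,…,f_n ∈ X*, and suppose the frame operator S x = Σ_j f_j(x) τ_j is diagonalizable with nonnegative real eigenvalues. Then Σ_{j=1}^n Σ_{k=1}^n f_j(τ_k) f_k(τ_j) ≥ (1/d) (Σ_{j=1}^n f_j(τ_j))^2. -/
open ComplexOrder

lemma trace_smulRight' {X : Type*} [AddCommGroup X] [Module ℂ X] [FiniteDimensional ℂ X]
    (g : Module.Dual ℂ X) (x : X) :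
    LinearMap.trace ℂ X (LinearMap.smulRight g x) = g x := by
  have h : LinearMap.smulRight g x = dualTensorHom ℂ X X (g ⊗ₜ[ℂ] x) := by
    ext y; simp [dualTensorHom_apply]
  rw [h]
  have := LinearMap.trace_eq_contract ℂ X
  have := congrArg (fun φ => φ (g ⊗ₜ[ℂ] x)) this
  simpa using this

/-- If the frame operator `S x = ∑ j, f j x • τ j` on a `d`-dimensional complex space is
diagonalizable with nonnegative real eigenvalues, then
`∑ j ∑ k, f j (τ k) * f k (τ j) ≥ (1/d) (∑ j, f j (τ j))^2`. -/
theorem welch_double_sum_lower {X : Type*} [AddCommGroup X] [Module ℂ X] [FiniteDimensional ℂ X]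
    (d n : ℕ) (hd : Module.finrank ℂ X = d) (hd1 : 1 ≤ d)
    (τ : Fin n → X) (f : Fin n → Module.Dual ℂ X)
    (S : X →ₗ[ℂ] X) (hS : S = ∑ j, LinearMap.smulRight (f j) (τ j))
    (hdiag : ∃ (b : Module.Basis (Fin d) ℂ X) (lam : Fin d → ℝ),
      (∀ i, 0 ≤ lam i) ∧ ∀ i, S (b i) = (lam i : ℂ) • b i) :
    (1 / (d : ℂ)) * (∑ j, f j (τ j)) ^ 2 ≤ ∑ j, ∑ k, f j (τ k) * f k (τ j) := by
  obtain ⟨b, lam, hlam, hb⟩ := hdiag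
  -- trace of S
  have htr1 : LinearMap.trace ℂ X S = ∑ j, f j (τ j) := by
    rw [hS, map_sum]
    exact Finset.sum_congr rfl fun j _ => trace_smulRight' _ _
  -- trace of S via eigenbasis
  have htr1' : LinearMap.trace ℂ X S = ∑ i, (lam i : ℂ) := by
    rw [LinearMap.trace_eq_matrix_trace ℂ b, Matrix.trace]
    refine Finset.sum_congr rfl fun i _ => ?_
    simp only [LinearMap.toMatrix_apply, Matrix.diag_apply, hb i, map_smul,
      Finsupp.smul_apply, Module.Basis.repr_self, Finsupp.single_eq_same, smul_eq_mul, mul_one]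
  -- S ∘ S as a double sum of rank-one maps
  have hSS : S ∘ₗ S = ∑ j, ∑ k, f j (τ k) • LinearMap.smulRight (f k) (τ j) := by
    ext x
    simp [hS, Finset.smul_sum, Finset.sum_smul, smul_smul, mul_comm, mul_left_comm]
  have htr2 : LinearMap.trace ℂ X (S ∘ₗ S) = ∑ j, ∑ k, f j (τ k) * f k (τ j) := by
    rw [hSS, map_sum]
    refine Finset.sum_congr rfl fun j _ => ?_
    rw [map_sum]
    refine Finset.sum_congr rfl fun k _ => ?_
    rw [map_smul, trace_smulRight' (f k) (τ j), smul_eq_mul]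
  have hbb : ∀ i, (S ∘ₗ S) (b i) = ((lam i : ℂ)) ^ 2 • b i := by
    intro i
    rw [LinearMap.comp_apply, hb i, map_smul, hb i, smul_smul, sq]
  have htr2' : LinearMap.trace ℂ X (S ∘ₗ S) = ∑ i, ((lam i : ℂ)) ^ 2 := by
    rw [LinearMap.trace_eq_matrix_trace ℂ b, Matrix.trace]
    refine Finset.sum_congr rfl fun i _ => ?_
    simp only [LinearMap.toMatrix_apply, Matrix.diag_apply, hbb i, map_smul,
      Finsupp.smul_apply, Module.Basis.repr_self, Finsupp.single_eq_same, smul_eq_mul, mul_one]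
  rw [← htr2, htr2', ← htr1, htr1']
  -- reduce to a real inequality
  have hdpos : (0 : ℝ) < d := by exact_mod_cast hd1
  have hreal : ((∑ i, lam i) ^ 2 : ℝ) ≤ d * ∑ i, lam i ^ 2 := by
    have := sq_sum_le_card_mul_sum_sq (s := (Finset.univ : Finset (Fin d))) (f := lam)
    simpa using this
  have hkey : (1 / (d : ℝ)) * (∑ i, lam i) ^ 2 ≤ ∑ i, lam i ^ 2 := by
    have h1 : (1 / (d : ℝ)) * ((∑ i, lam i) ^ 2) ≤ (1 / d) * (d * ∑ i, lam i ^ 2) := by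
      apply mul_le_mul_of_nonneg_left hreal
      positivity
    have h2 : (1 / (d : ℝ)) * (d * ∑ i, lam i ^ 2) = ∑ i, lam i ^ 2 := by
      field_simp
    linarith
  have e1 : (∑ i, ((lam i : ℂ))) = ((∑ i, lam i : ℝ) : ℂ) := by push_cast; rfl
  have e2 : (∑ i, ((lam i : ℂ)) ^ 2) = ((∑ i, lam i ^ 2 : ℝ) : ℂ) := by push_cast; rfl
  have e3 : (1 / (d : ℂ)) = ((1 / (d : ℝ) : ℝ) : ℂ) := by push_cast; rfl
  rw [e1, e2, e3, ← Complex.ofReal_pow, ← Complex.ofReal_mul, Complex.real_le_real]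
  exact hkey
end

section
/- Let X be a d-dimensional complex vector space, n ≥ d, τ_1,…,τ_n ∈ X and f_1,…,f_n ∈ X* with f_j(τ_j) = 1 for all j. If the frame operator S x = Σ_j f_j(x) τ_j is diagonalizable with nonnegative real eigenvalues, then max_{j ≠ k} |f_j(τ_k) f_k(τ_j)| ≥ (n − d)/(d(n − 1)). -/
open LinearMap

lemma trace_smulRight_aux {X : Type*} [AddCommGroup X] [Module ℂ X]
    [FiniteDimensional ℂ X] (g : Module.Dual ℂ X) (x : X) :
    LinearMap.trace ℂ X (g.smulRight x) = g x := by
  have h : g.smulRight x = dualTensorHom ℂ X X (g ⊗ₜ x) := by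
    ext y; simp [dualTensorHom_apply]
  rw [h, LinearMap.trace_eq_contract_apply, contractLeft_apply]

/-- First order Welch bound for Banach spaces (product form): if `f j (τ j) = 1` for all `j`
and the frame operator is diagonalizable with nonnegative real eigenvalues, then
`max_{j ≠ k} |f j (τ k) * f k (τ j)| ≥ (n - d)/(d (n - 1))`. -/
theorem welch_first_order_product {X : Type*} [AddCommGroup X] [Module ℂ X]
    [FiniteDimensional ℂ X]
    (d n : ℕ) (hd : Module.finrank ℂ X = d) (hd1 : 1 ≤ d) (hdn : d ≤ n) (hn2 : 2 ≤ n)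
    (τ : Fin n → X) (f : Fin n → Module.Dual ℂ X)
    (hone : ∀ j, f j (τ j) = 1)
    (S : X →ₗ[ℂ] X) (hS : S = ∑ j, LinearMap.smulRight (f j) (τ j))
    (hdiag : ∃ (b : Module.Basis (Fin d) ℂ X) (lam : Fin d → ℝ),
      (∀ i, 0 ≤ lam i) ∧ ∀ i, S (b i) = (lam i : ℂ) • b i) :
    ((n : ℝ) - d) / (d * ((n : ℝ) - 1)) ≤
      ⨆ p : {q : Fin n × Fin n // q.1 ≠ q.2},
        ‖f p.1.1 (τ p.1.2) * f p.1.2 (τ p.1.1)‖ := by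
  obtain ⟨b, lam, hlam0, hlam⟩ := hdiag
  -- trace of S via eigenbasis
  have htr_basis : ∀ (T : X →ₗ[ℂ] X) (mu : Fin d → ℝ),
      (∀ i, T (b i) = (mu i : ℂ) • b i) → LinearMap.trace ℂ X T = ∑ i, (mu i : ℂ) := by
    intro T mu hmu
    rw [LinearMap.trace_eq_matrix_trace ℂ b T, Matrix.trace]
    refine Finset.sum_congr rfl fun i _ => ?_
    rw [Matrix.diag_apply, LinearMap.toMatrix_apply, hmu i, map_smul, Finsupp.smul_apply,
      Module.Basis.repr_self, smul_eq_mul, Finsupp.single_eq_same, mul_one]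
  -- trace S = n
  have htrS : LinearMap.trace ℂ X S = (n : ℂ) := by
    rw [hS, map_sum]
    simp only [trace_smulRight_aux, hone]
    simp
  have htrS' : LinearMap.trace ℂ X S = ∑ i, (lam i : ℂ) := htr_basis S lam hlam
  have hsumlam : ∑ i, lam i = (n : ℝ) := by
    have : ((∑ i, lam i : ℝ) : ℂ) = (n : ℂ) := by
      push_cast
      rw [← htrS', htrS]
    exact_mod_cast this
  -- trace S² via eigenbasis
  have hlam2 : ∀ i, (S ∘ₗ S) (b i) = ((lam i ^ 2 : ℝ) : ℂ) • b i := by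
    intro i
    simp only [LinearMap.comp_apply, hlam i, map_smul, hlam i, smul_smul]
    push_cast
    ring_nf
  have htrSS : LinearMap.trace ℂ X (S ∘ₗ S) = ∑ i, ((lam i ^ 2 : ℝ) : ℂ) :=
    htr_basis (S ∘ₗ S) (fun i => lam i ^ 2) hlam2
  -- trace S² via the frame expansion
  have hcomp : ∀ j k : Fin n, (smulRight (f j) (τ j)) ∘ₗ (smulRight (f k) (τ k))
      = smulRight ((f j (τ k)) • (f k)) (τ j) := by
    intro j k
    ext x
    simp [smul_smul, mul_comm]
  have htrSS' : LinearMap.trace ℂ X (S ∘ₗ S)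
      = ∑ j, ∑ k, f j (τ k) * f k (τ j) := by
    have hexp : S ∘ₗ S = ∑ j, ∑ k, smulRight ((f j (τ k)) • (f k)) (τ j) := by
      rw [← Module.End.mul_eq_comp, hS, Finset.sum_mul]
      refine Finset.sum_congr rfl fun j _ => ?_
      rw [Finset.mul_sum]
      refine Finset.sum_congr rfl fun k _ => ?_
      rw [Module.End.mul_eq_comp, hcomp j k]
    rw [hexp, map_sum]
    refine Finset.sum_congr rfl fun j _ => ?_
    rw [map_sum]
    refine Finset.sum_congr rfl fun k _ => ?_
    rw [trace_smulRight_aux]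
    simp [mul_comm]
  set A : ℝ := ∑ i, lam i ^ 2 with hA
  have hAc : (∑ j, ∑ k, f j (τ k) * f k (τ j)) = (A : ℂ) := by
    rw [← htrSS', htrSS, hA]
    push_cast
    ring
  -- Cauchy-Schwarz : n^2 ≤ d * A
  have hCS : (n : ℝ) ^ 2 ≤ d * A := by
    have := sq_sum_le_card_mul_sum_sq (s := (Finset.univ : Finset (Fin d)))
      (f := lam)
    simpa [hsumlam, hA] using this
  -- bound via the sup
  classical
  set M := ⨆ p : {q : Fin n × Fin n // q.1 ≠ q.2},
      ‖f p.1.1 (τ p.1.2) * f p.1.2 (τ p.1.1)‖ with hMdef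
  have hbdd : BddAbove (Set.range fun p : {q : Fin n × Fin n // q.1 ≠ q.2} =>
      ‖f p.1.1 (τ p.1.2) * f p.1.2 (τ p.1.1)‖) :=
    Set.Finite.bddAbove (Set.finite_range _)
  have hM : ∀ j k : Fin n, j ≠ k → ‖f j (τ k) * f k (τ j)‖ ≤ M := by
    intro j k h
    exact le_ciSup hbdd (⟨(j, k), h⟩ : {q : Fin n × Fin n // q.1 ≠ q.2})
  have hM0 : 0 ≤ M := by
    refine le_trans (norm_nonneg _)
      (hM ⟨0, by omega⟩ ⟨1, by omega⟩ ?_)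
    intro h
    have := congrArg Fin.val h
    simp at this
  -- off-diagonal sum equals A - n
  have hrest : ∑ j, ∑ k ∈ Finset.univ.erase j, f j (τ k) * f k (τ j)
      = ((A - n : ℝ) : ℂ) := by
    have h1 : ∀ j : Fin n, ∑ k, f j (τ k) * f k (τ j)
        = 1 + ∑ k ∈ Finset.univ.erase j, f j (τ k) * f k (τ j) := by
      intro j
      rw [← Finset.add_sum_erase _ _ (Finset.mem_univ j), hone j, one_mul]
    have h2 : (∑ j, ∑ k, f j (τ k) * f k (τ j))
        = (n : ℂ) + ∑ j, ∑ k ∈ Finset.univ.erase j, f j (τ k) * f k (τ j) := by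
      rw [Finset.sum_congr rfl fun j _ => h1 j, Finset.sum_add_distrib]
      simp
    rw [hAc] at h2
    push_cast
    linear_combination -h2
  -- A - n ≥ 0 and A - n ≤ n (n-1) M
  have hn0 : (0 : ℝ) < n := by positivity
  have hd0 : (0 : ℝ) < d := by exact_mod_cast hd1
  have hAn : (n : ℝ) ≤ A := by
    nlinarith [hCS, (show (d : ℝ) ≤ n by exact_mod_cast hdn)]
  have hkey : A - n ≤ (n : ℝ) * ((n : ℝ) - 1) * M := by
    have habs : A - n = ‖∑ j, ∑ k ∈ Finset.univ.erase j,
        f j (τ k) * f k (τ j)‖ := by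
      rw [hrest, Complex.norm_real, Real.norm_eq_abs, abs_of_nonneg (by linarith)]
    rw [habs]
    calc ‖∑ j, ∑ k ∈ Finset.univ.erase j, f j (τ k) * f k (τ j)‖
        ≤ ∑ j, ‖∑ k ∈ Finset.univ.erase j, f j (τ k) * f k (τ j)‖ :=
          norm_sum_le _ _
      _ ≤ ∑ j : Fin n, ∑ k ∈ Finset.univ.erase j, ‖f j (τ k) * f k (τ j)‖ :=
          Finset.sum_le_sum fun j _ => norm_sum_le _ _
      _ ≤ ∑ j : Fin n, ∑ _k ∈ Finset.univ.erase j, M := by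
          refine Finset.sum_le_sum fun j _ => Finset.sum_le_sum fun k hk => ?_
          exact hM j k (fun h => (Finset.mem_erase.mp hk).1 h.symm)
      _ = ∑ _j : Fin n, ((n - 1 : ℕ) : ℝ) * M := by
          refine Finset.sum_congr rfl fun j _ => ?_
          rw [Finset.sum_const, Finset.card_erase_of_mem (Finset.mem_univ j),
            Finset.card_univ, Fintype.card_fin, nsmul_eq_mul]
      _ = (n : ℝ) * ((n : ℝ) - 1) * M := by
          rw [Finset.sum_const, Finset.card_univ, Fintype.card_fin, nsmul_eq_mul]
          have : ((n - 1 : ℕ) : ℝ) = (n : ℝ) - 1 := by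
            have : 1 ≤ n := by omega
            push_cast [this]
            ring
          rw [this]
          ring
  -- conclude
  have hn1 : (2 : ℝ) ≤ (n : ℝ) := by exact_mod_cast hn2
  rw [div_le_iff₀ (mul_pos hd0 (by linarith))]
  have h2 : (n : ℝ) * ((n : ℝ) - (d : ℝ)) ≤ (n : ℝ) * (M * ((d : ℝ) * ((n : ℝ) - 1))) := by
    nlinarith [hkey, hCS, hn1]
  nlinarith [h2, hn0]
end

section
/- Let X be a d-dimensional complex vector space, n ≥ d, τ_1,…,τ_n ∈ X, f_1,…,f_n ∈ X* with f_j(τ_j) = 1 for all j, and suppose the frame operator S x = Σ_j f_j(x) τ_j is diagonalizable with nonnegative real eigenvalues. Then for every real p with 2 < p < ∞, Σ_{1 ≤ j,k ≤ n} |f_j(τ_k) f_k(τ_j)|^{p/2} ≥ n(n−1) ((n−d)/(d(n−1)))^{p/2} + n. -/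
open Finset in
private lemma welch_aux (d n : ℕ) (hd1 : 1 ≤ d) (hdn : d ≤ n) (hn2 : 2 ≤ n)
    (A : Fin n × Fin n → ℝ) (hA0 : ∀ jk, 0 ≤ A jk) (hAd : ∀ j : Fin n, A (j, j) = 1)
    (hAsum : (n : ℝ) ^ 2 / d ≤ ∑ jk : Fin n × Fin n, A jk)
    (q : ℝ) (hq : 1 ≤ q) :
    (n : ℝ) * ((n : ℝ) - 1) * (((n : ℝ) - d) / (d * ((n : ℝ) - 1))) ^ q + n ≤
      ∑ jk : Fin n × Fin n, A jk ^ q := by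
  have hn1 : (1:ℝ) ≤ (n:ℝ) := by exact_mod_cast Nat.one_le_of_lt hn2
  have hd0 : (0:ℝ) < d := by exact_mod_cast hd1
  have hdn' : (d:ℝ) ≤ n := by exact_mod_cast hdn
  have hn1' : (0:ℝ) < (n:ℝ) - 1 := by
    have : (2:ℝ) ≤ n := by exact_mod_cast hn2
    linarith
  set s : Finset (Fin n × Fin n) := univ.filter (fun jk => jk.1 ≠ jk.2) with hs
  set t : Finset (Fin n × Fin n) := univ.filter (fun jk => jk.1 = jk.2) with ht
  have hsplit : ∀ B : Fin n × Fin n → ℝ,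
      ∑ jk : Fin n × Fin n, B jk = ∑ jk ∈ t, B jk + ∑ jk ∈ s, B jk := by
    intro B
    rw [ht, hs, Finset.sum_filter_add_sum_filter_not]
  have htsum : ∀ B : Fin n × Fin n → ℝ, (∀ j, B (j, j) = 1) → ∑ jk ∈ t, B jk = n := by
    intro B hB
    rw [ht, Finset.sum_filter, Fintype.sum_prod_type]
    simp only [Finset.sum_ite_eq', Finset.mem_univ, if_true]
    simp [hB]
  have hN : (s.card : ℝ) = n * (n - 1) := by
    have h1 : (t.card : ℝ) = n := by
      have := htsum (fun _ => 1) (fun _ => rfl)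
      simpa using this
    have h2 : t.card + s.card = n ^ 2 := by
      have := Finset.card_filter_add_card_filter_not
        (s := (univ : Finset (Fin n × Fin n))) (p := fun jk => jk.1 = jk.2)
      simp only [← hs, ← ht] at this
      rw [this]; simp [sq]
    have h2' : (t.card : ℝ) + (s.card : ℝ) = (n:ℝ) ^ 2 := by exact_mod_cast h2
    rw [h1] at h2'; nlinarith
  have hN0 : (0:ℝ) < s.card := by rw [hN]; positivity
  have hssum : (n:ℝ) * ((n:ℝ) - d) / d ≤ ∑ jk ∈ s, A jk := by
    have := hsplit A
    have ht1 := htsum A hAd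
    have : (n:ℝ)^2/d - n ≤ ∑ jk ∈ s, A jk := by linarith [hAsum]
    have heq : (n:ℝ) * ((n:ℝ) - d) / d = (n:ℝ)^2/d - n := by field_simp
    linarith
  set c : ℝ := ((n : ℝ) - d) / (d * ((n : ℝ) - 1)) with hc
  have hc0 : 0 ≤ c := by
    apply div_nonneg; linarith; positivity
  have hjensen : (∑ jk ∈ s, (1 / (s.card : ℝ)) * A jk) ^ q ≤
      ∑ jk ∈ s, (1 / (s.card : ℝ)) * A jk ^ q := by
    apply Real.rpow_arith_mean_le_arith_mean_rpow s _ _ (fun i _ => by positivity)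
      (by rw [Finset.sum_const, nsmul_eq_mul, mul_one_div_cancel hN0.ne']) (fun i _ => hA0 i) hq
  have hsum_div : ∀ B : Fin n × Fin n → ℝ,
      ∑ jk ∈ s, (1 / (s.card : ℝ)) * B jk = (∑ jk ∈ s, B jk) / s.card := by
    intro B; rw [← Finset.mul_sum]; ring
  have hcN : c * (s.card : ℝ) = (n : ℝ) * ((n:ℝ) - d) / d := by
    rw [hN, hc]; field_simp
  have hmean : c ≤ (∑ jk ∈ s, A jk) / (s.card : ℝ) := by
    rw [le_div_iff₀ hN0, hcN]; exact hssum
  have hkey : (s.card : ℝ) * c ^ q ≤ ∑ jk ∈ s, A jk ^ q := by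
    rw [hsum_div A, hsum_div (fun jk => A jk ^ q)] at hjensen
    have h5 : c ^ q ≤ (∑ jk ∈ s, A jk ^ q) / (s.card : ℝ) :=
      le_trans (Real.rpow_le_rpow hc0 hmean (by linarith)) hjensen
    rw [mul_comm]
    exact (le_div_iff₀ hN0).mp h5
  have hfinal := hsplit (fun jk => A jk ^ q)
  have htq : ∑ jk ∈ t, A jk ^ q = n := htsum _ (fun j => by rw [hAd]; simp)
  calc (n : ℝ) * ((n : ℝ) - 1) * c ^ q + n = (s.card : ℝ) * c ^ q + n := by rw [hN]
    _ ≤ ∑ jk ∈ s, A jk ^ q + n := by linarith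
    _ = ∑ jk : Fin n × Fin n, A jk ^ q := by rw [hfinal, htq]; ring

/-- p-th power Welch bound: if `f j (τ j) = 1` for all `j` and the frame operator is
diagonalizable with nonnegative real eigenvalues, then for `2 < p < ∞`,
`∑_{j,k} |f j (τ k) f k (τ j)|^(p/2) ≥ n(n-1)((n-d)/(d(n-1)))^(p/2) + n`. -/
theorem welch_pth_power {X : Type*} [AddCommGroup X] [Module ℂ X] [FiniteDimensional ℂ X]
    (d n : ℕ) (hd : Module.finrank ℂ X = d) (hd1 : 1 ≤ d) (hdn : d ≤ n) (hn2 : 2 ≤ n)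
    (τ : Fin n → X) (f : Fin n → Module.Dual ℂ X)
    (hone : ∀ j, f j (τ j) = 1)
    (S : X →ₗ[ℂ] X) (hS : S = ∑ j, LinearMap.smulRight (f j) (τ j))
    (hdiag : ∃ (b : Module.Basis (Fin d) ℂ X) (lam : Fin d → ℝ),
      (∀ i, 0 ≤ lam i) ∧ ∀ i, S (b i) = (lam i : ℂ) • b i)
    (p : ℝ) (hp : 2 < p) :
    (n : ℝ) * ((n : ℝ) - 1) * (((n : ℝ) - d) / (d * ((n : ℝ) - 1))) ^ (p / 2) + n ≤
      ∑ j, ∑ k, ‖f j (τ k) * f k (τ j)‖ ^ (p / 2) := by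
  obtain ⟨b, lam, hlam0, hlam⟩ := hdiag
  -- trace of a rank-one map
  have TR : ∀ (g : Module.Dual ℂ X) (x : X),
      LinearMap.trace ℂ X (g.smulRight x) = g x := by
    intro g x
    rw [LinearMap.trace_eq_matrix_trace ℂ b, Matrix.trace]
    simp only [Matrix.diag, LinearMap.toMatrix_apply, LinearMap.smulRight_apply, map_smul,
      Finsupp.smul_apply, smul_eq_mul]
    conv_rhs => rw [← b.sum_repr x, map_sum]
    simp [mul_comm]
  have hSy : ∀ y, S y = ∑ j, f j y • τ j := by
    intro y; rw [hS]; simp [LinearMap.sum_apply]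
  have h1 : LinearMap.trace ℂ X S = ∑ j, f j (τ j) := by
    rw [hS, map_sum]; simp [TR]
  have hcomp : S ∘ₗ S = ∑ j, (f j).smulRight (S (τ j)) := by
    ext x
    simp only [LinearMap.comp_apply, LinearMap.sum_apply, LinearMap.smulRight_apply]
    rw [hSy x, map_sum]
    simp [map_smul]
  have h2 : LinearMap.trace ℂ X (S ∘ₗ S) = ∑ j, ∑ k, f j (τ k) * f k (τ j) := by
    rw [hcomp, map_sum]
    simp only [TR]
    refine Finset.sum_congr rfl fun j _ => ?_
    rw [hSy (τ j), map_sum]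
    simp [mul_comm]
  have h3 : LinearMap.trace ℂ X S = ∑ i, (lam i : ℂ) := by
    rw [LinearMap.trace_eq_matrix_trace ℂ b, Matrix.trace]
    simp only [Matrix.diag, LinearMap.toMatrix_apply, hlam, map_smul, Finsupp.smul_apply,
      Module.Basis.repr_self, Finsupp.single_eq_same, smul_eq_mul, mul_one]
  have h4 : LinearMap.trace ℂ X (S ∘ₗ S) = ∑ i, (lam i : ℂ) ^ 2 := by
    rw [LinearMap.trace_eq_matrix_trace ℂ b, Matrix.trace]
    simp only [Matrix.diag, LinearMap.toMatrix_apply, LinearMap.comp_apply, hlam, map_smul,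
      Finsupp.smul_apply, Module.Basis.repr_self, Finsupp.single_eq_same, smul_eq_mul, mul_one, sq]
  -- the eigenvalues sum to n
  have hsumlam : ∑ i, lam i = n := by
    have : ((∑ i, lam i : ℝ) : ℂ) = ((n : ℝ) : ℂ) := by
      push_cast
      rw [← h3, h1]
      simp [hone]
    exact_mod_cast this
  -- Cauchy–Schwarz: sum of squares of eigenvalues is at least n²/d
  have hCS : (n : ℝ) ^ 2 / d ≤ ∑ i, lam i ^ 2 := by
    have hd0 : (0:ℝ) < d := by exact_mod_cast hd1
    have := sq_sum_le_card_mul_sum_sq (s := (Finset.univ : Finset (Fin d))) (f := lam)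
    simp only [Finset.card_univ, Fintype.card_fin, hsumlam] at this
    rw [div_le_iff₀ hd0]
    calc (n:ℝ)^2 = (n:ℝ)^2 := rfl
      _ ≤ (d:ℝ) * ∑ i, lam i ^ 2 := by exact_mod_cast this
      _ = (∑ i, lam i ^ 2) * d := by ring
  set A : Fin n × Fin n → ℝ := fun jk => ‖f jk.1 (τ jk.2) * f jk.2 (τ jk.1)‖ with hA
  have hA0 : ∀ jk, 0 ≤ A jk := fun jk => norm_nonneg _
  have hAd : ∀ j : Fin n, A (j, j) = 1 := by
    intro j; simp [hA, hone]
  have hAsum : (n : ℝ) ^ 2 / d ≤ ∑ jk : Fin n × Fin n, A jk := by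
    refine le_trans hCS ?_
    have habs : ((∑ i, lam i ^ 2 : ℝ) : ℂ) = ∑ j, ∑ k, f j (τ k) * f k (τ j) := by
      push_cast
      rw [← h4, h2]
    calc ∑ i, lam i ^ 2 = ‖((∑ i, lam i ^ 2 : ℝ) : ℂ)‖ := by
          rw [Complex.norm_real, Real.norm_eq_abs, abs_of_nonneg]
          exact Finset.sum_nonneg fun i _ => sq_nonneg _
      _ = ‖∑ j, ∑ k, f j (τ k) * f k (τ j)‖ := by rw [habs]
      _ ≤ ∑ j, ∑ k, ‖f j (τ k) * f k (τ j)‖ := by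
          refine le_trans (norm_sum_le _ _) ?_
          exact Finset.sum_le_sum fun j _ => norm_sum_le _ _
      _ = ∑ jk : Fin n × Fin n, A jk := by rw [Fintype.sum_prod_type]
  have hq : 1 ≤ p / 2 := by linarith
  have := welch_aux d n hd1 hdn hn2 A hA0 hAd hAsum (p / 2) hq
  calc (n : ℝ) * ((n : ℝ) - 1) * (((n : ℝ) - d) / (d * ((n : ℝ) - 1))) ^ (p / 2) + n
      ≤ ∑ jk : Fin n × Fin n, A jk ^ (p / 2) := this
    _ = ∑ j, ∑ k, ‖f j (τ k) * f k (τ j)‖ ^ (p / 2) := by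
        rw [Fintype.sum_prod_type]
end

section
/- Let G ∈ M_n(ℂ) be diagonalizable with nonnegative real eigenvalues, with diagonal entries all equal to 1 (so trace G = n), and suppose n > rank(G). Then max_{j ≠ k} |G_{jk} G_{kj}| ≥ (n − rank G)/(rank G · (n − 1)). -/
/-- For a diagonalizable complex matrix `G` with nonnegative real eigenvalues, unit diagonal
and `n > rank G`, `max_{j ≠ k} |G j k * G k j| ≥ (n - rank G)/(rank G * (n - 1))`. -/
theorem welch_gram_max_bound (n : ℕ) (hn2 : 2 ≤ n) (G : Matrix (Fin n) (Fin n) ℂ)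
    (hdiagonal : ∀ j, G j j = 1)
    (hdiag : ∃ (P : Matrix (Fin n) (Fin n) ℂ) (_ : IsUnit P.det) (lam : Fin n → ℝ),
      (∀ i, 0 ≤ lam i) ∧ G = P * Matrix.diagonal (fun i => (lam i : ℂ)) * P⁻¹)
    (hrank : 1 ≤ G.rank) (hrn : G.rank < n) :
    ((n : ℝ) - G.rank) / (G.rank * ((n : ℝ) - 1)) ≤
      ⨆ p : {q : Fin n × Fin n // q.1 ≠ q.2},
        ‖G p.1.1 p.1.2 * G p.1.2 p.1.1‖ := by
  classical
  obtain ⟨P, hP, lam, hlam, hG⟩ := hdiag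
  have key : ∀ D : Matrix (Fin n) (Fin n) ℂ, (P * D * P⁻¹).trace = D.trace := by
    intro D
    rw [Matrix.trace_mul_cycle, Matrix.nonsing_inv_mul _ hP, Matrix.one_mul]
  -- trace G = n
  have htr1 : (∑ i, lam i : ℝ) = n := by
    have h1 : G.trace = ∑ i, (lam i : ℂ) := by rw [hG, key, Matrix.trace_diagonal]
    have h2 : G.trace = (n : ℂ) := by
      rw [Matrix.trace]
      simp [Matrix.diag, hdiagonal]
    have h3 : (∑ i, (lam i : ℂ)) = (n : ℂ) := h1.symm.trans h2
    exact_mod_cast h3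
  -- trace G² = ∑ lam²
  set Q : ℝ := ∑ i, lam i ^ 2 with hQdef
  have htr2 : (G * G).trace = ((Q : ℝ) : ℂ) := by
    have hGG : G * G = P * (Matrix.diagonal (fun i => (lam i : ℂ)) *
        Matrix.diagonal (fun i => (lam i : ℂ))) * P⁻¹ := by
      rw [hG]
      simp only [Matrix.mul_assoc]
      rw [← Matrix.mul_assoc P⁻¹ P, Matrix.nonsing_inv_mul _ hP, Matrix.one_mul]
    rw [hGG, key, Matrix.diagonal_mul_diagonal, Matrix.trace_diagonal, hQdef]
    push_cast
    ring_nf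
  -- rank = number of nonzero eigenvalues
  set S : Finset (Fin n) := Finset.univ.filter (fun i => lam i ≠ 0) with hSdef
  have hrS : G.rank = S.card := by
    rw [hG, Matrix.rank_mul_eq_left_of_isUnit_det _ _ (by simpa using hP.inv),
      Matrix.rank_mul_eq_right_of_isUnit_det _ _ hP, Matrix.rank_diagonal]
    rw [Fintype.card_subtype]
    exact congrArg Finset.card (by ext i; simp [hSdef])
  -- sums restricted to S
  have hsum1 : ∑ i ∈ S, lam i = n := by
    rw [← htr1]
    apply Finset.sum_subset (Finset.filter_subset _ _)
    intro x _ hx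
    simpa using (not_not.mp (by simpa [hSdef] using hx))
  have hsum2 : ∑ i ∈ S, lam i ^ 2 = Q := by
    apply Finset.sum_subset (Finset.filter_subset _ _)
    intro x _ hx
    have : lam x = 0 := not_not.mp (by simpa [hSdef] using hx)
    simp [this]
  -- Cauchy–Schwarz
  have hcs : (n : ℝ) ^ 2 ≤ (G.rank : ℝ) * Q := by
    have := sq_sum_le_card_mul_sum_sq (s := S) (f := lam)
    rw [hsum1, hsum2] at this
    rw [hrS]
    exact_mod_cast this
  -- trace G² as a double sum
  have hdouble : (G * G).trace = ∑ q ∈ (Finset.univ : Finset (Fin n)) ×ˢ Finset.univ,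
      G q.1 q.2 * G q.2 q.1 := by
    rw [Matrix.trace, Finset.univ_product_univ, Fintype.sum_prod_type]
    simp [Matrix.diag, Matrix.mul_apply]
  -- split into diagonal and off-diagonal
  set Ω : Finset (Fin n × Fin n) := (Finset.univ : Finset (Fin n)).offDiag with hΩdef
  have hsplit : ((Q : ℝ) : ℂ) = (n : ℂ) + ∑ q ∈ Ω, G q.1 q.2 * G q.2 q.1 := by
    rw [← htr2, hdouble, ← Finset.diag_union_offDiag,
      Finset.sum_union (Finset.disjoint_diag_offDiag _), Finset.sum_diag]
    simp [hdiagonal, hΩdef]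
  -- off-diagonal absolute sum lower bound
  have hT : Q - n ≤ ∑ q ∈ Ω, ‖G q.1 q.2 * G q.2 q.1‖ := by
    calc Q - (n : ℝ) ≤ |Q - (n : ℝ)| := le_abs_self _
    _ = ‖((Q : ℝ) : ℂ) - (n : ℂ)‖ := by
        rw [← Complex.ofReal_natCast, ← Complex.ofReal_sub, Complex.norm_real, Real.norm_eq_abs]
    _ = ‖∑ q ∈ Ω, G q.1 q.2 * G q.2 q.1‖ := by rw [hsplit]; ring_nf
    _ ≤ ∑ q ∈ Ω, ‖G q.1 q.2 * G q.2 q.1‖ := norm_sum_le _ _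
  -- cardinality of Ω
  have hΩcard : (Ω.card : ℝ) = (n : ℝ) * n - n := by
    rw [hΩdef, Finset.offDiag_card, Finset.card_univ, Fintype.card_fin]
    have : n ≤ n * n := Nat.le_mul_of_pos_left n (by omega)
    rw [Nat.cast_sub this, Nat.cast_mul]
  -- real-number facts
  have hr1 : (1 : ℝ) ≤ (G.rank : ℝ) := by exact_mod_cast hrank
  have hrn' : (G.rank : ℝ) + 1 ≤ (n : ℝ) := by exact_mod_cast hrn
  have hn2' : (2 : ℝ) ≤ (n : ℝ) := by exact_mod_cast hn2
  set b : ℝ := ((n : ℝ) - G.rank) / (G.rank * ((n : ℝ) - 1)) with hbdef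
  -- the constant sum bound
  have hconst : ∑ _q ∈ Ω, b ≤ ∑ q ∈ Ω, ‖G q.1 q.2 * G q.2 q.1‖ := by
    rw [Finset.sum_const, nsmul_eq_mul]
    refine le_trans ?_ hT
    rw [hΩcard, hbdef, ← mul_div_assoc, div_le_iff₀ (by nlinarith)]
    nlinarith [mul_nonneg (sub_nonneg.2 (by linarith : (1:ℝ) ≤ (n:ℝ)))
      (sub_nonneg.2 hcs)]
  -- extract a large term
  have hne : Ω.Nonempty := by
    exact ⟨(⟨0, by omega⟩, ⟨1, by omega⟩), by simp [hΩdef, Finset.mem_offDiag]⟩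
  obtain ⟨p, hpΩ, hpb⟩ := Finset.exists_le_of_sum_le hne hconst
  have hpne : p.1 ≠ p.2 := (Finset.mem_offDiag.mp hpΩ).2.2
  refine le_trans hpb ?_
  exact le_ciSup (f := fun p : {q : Fin n × Fin n // q.1 ≠ q.2} =>
    ‖G p.1.1 p.1.2 * G p.1.2 p.1.1‖)
    (Set.Finite.bddAbove (Set.finite_range _)) ⟨p, hpne⟩
end

section
/- Let H be a d-dimensional complex inner product space and τ_1,…,τ_n ∈ H unit vectors with n ≥ d. Then Σ_{j=1}^n Σ_{k=1}^n |⟨τ_j, τ_k⟩|^2 ≥ n^2/d, with equality if and only if the frame operator S h = Σ_j ⟨h, τ_j⟩ τ_j is a scalar multiple of the identity. -/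
open scoped InnerProductSpace
open Finset

set_option maxHeartbeats 800000

/-- First order discrete Welch bound in a `d`-dimensional complex Hilbert space, with the
tightness characterization: for unit vectors `τ_1, …, τ_n` with `n ≥ d`,
`∑_{j,k} |⟨τ_j, τ_k⟩|² ≥ n²/d`, with equality iff the frame operator is a scalar multiple
of the identity. -/
theorem welch_hilbert_first_order {H : Type*} [NormedAddCommGroup H]
    [InnerProductSpace ℂ H] [FiniteDimensional ℂ H]
    (d n : ℕ) (hd : Module.finrank ℂ H = d) (hd1 : 1 ≤ d) (hn : d ≤ n)
    (τ : Fin n → H) (hτ : ∀ j, ‖τ j‖ = 1) :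
    ((n : ℝ) ^ 2 / d ≤ ∑ j, ∑ k, ‖⟪τ j, τ k⟫_ℂ‖ ^ 2) ∧
      ((∑ j, ∑ k, ‖⟪τ j, τ k⟫_ℂ‖ ^ 2 = (n : ℝ) ^ 2 / d) ↔
        ∃ c : ℂ, ∀ h : H, ∑ j, ⟪τ j, h⟫_ℂ • τ j = c • h) := by
  classical
  set S : H →ₗ[ℂ] H :=
    { toFun := fun h => ∑ j, ⟪τ j, h⟫_ℂ • τ j
      map_add' := by
        intro x y
        simp [inner_add_right, add_smul, Finset.sum_add_distrib]
      map_smul' := by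
        intro c x
        simp [inner_smul_right, smul_smul, Finset.smul_sum] } with hSdef
  have hSapp : ∀ h, S h = ∑ j, ⟪τ j, h⟫_ℂ • τ j := fun h => rfl
  have hS : S.IsSymmetric := by
    intro x y
    simp only [hSapp, inner_sum, sum_inner, inner_smul_left, inner_smul_right]
    refine Finset.sum_congr rfl fun j _ => ?_
    rw [← inner_conj_symm x (τ j)]
    ring
  set e := hS.eigenvectorBasis hd with he
  set μ := hS.eigenvalues hd with hμ
  have heig : ∀ i, S (e i) = (μ i : ℂ) • e i := fun i => hS.apply_eigenvectorBasis hd i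
  set a : Fin d → Fin n → ℝ := fun i j => ‖⟪e i, τ j⟫_ℂ‖ ^ 2 with ha
  have hprod : ∀ x y : H, ⟪x, y⟫_ℂ * ⟪y, x⟫_ℂ = ((‖⟪y, x⟫_ℂ‖ ^ 2 : ℝ) : ℂ) := by
    intro x y
    rw [← inner_conj_symm y x, Complex.norm_conj, Complex.sq_norm, Complex.normSq_eq_conj_mul_self]; ring
  -- Lemma A : μ i = ∑ j, a i j
  have hA : ∀ i, μ i = ∑ j, a i j := by
    intro i
    have h1 : ⟪e i, S (e i)⟫_ℂ = (μ i : ℂ) := by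
      rw [heig, inner_smul_right]
      have : ⟪e i, e i⟫_ℂ = 1 := by
        rw [@inner_self_eq_norm_sq_to_K ℂ, e.orthonormal.1 i]
        simp
      rw [this, mul_one]
    have h2 : ⟪e i, S (e i)⟫_ℂ = ((∑ j, a i j : ℝ) : ℂ) := by
      rw [hSapp, inner_sum, Complex.ofReal_sum]
      exact Finset.sum_congr rfl fun j _ => by rw [inner_smul_right, hprod]
    have := h1.symm.trans h2
    exact_mod_cast this
  -- Lemma B : ∑ i, a i j = 1
  have hB : ∀ j, ∑ i, a i j = 1 := by
    intro j
    have h1 : ∑ i, ⟪τ j, e i⟫_ℂ * ⟪e i, τ j⟫_ℂ = ⟪τ j, τ j⟫_ℂ :=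
      e.sum_inner_mul_inner (τ j) (τ j)
    have h2 : ⟪τ j, τ j⟫_ℂ = 1 := by
      rw [@inner_self_eq_norm_sq_to_K ℂ, hτ j]; simp
    have : ((∑ i, a i j : ℝ) : ℂ) = 1 := by
      rw [Complex.ofReal_sum, ← h2, ← h1]
      exact Finset.sum_congr rfl fun i _ => (hprod (τ j) (e i)).symm
    exact_mod_cast this
  -- Lemma C : ∑ k, |⟪τ j, τ k⟫|² = ∑ i, μ i * a i j
  have hC : ∀ j, ∑ k, ‖⟪τ j, τ k⟫_ℂ‖ ^ 2 = ∑ i, μ i * a i j := by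
    intro j
    have h1 : ⟪τ j, S (τ j)⟫_ℂ = ((∑ k, ‖⟪τ j, τ k⟫_ℂ‖ ^ 2 : ℝ) : ℂ) := by
      rw [hSapp, inner_sum, Complex.ofReal_sum]
      exact Finset.sum_congr rfl fun k _ => by rw [inner_smul_right, hprod]
    have hexp : S (τ j) = ∑ i, (μ i : ℂ) • (⟪e i, τ j⟫_ℂ • e i) := by
      conv_lhs => rw [← e.sum_repr' (τ j)]
      rw [map_sum]
      exact Finset.sum_congr rfl fun i _ => by rw [map_smul, heig, smul_comm]
    have h2 : ⟪τ j, S (τ j)⟫_ℂ = ((∑ i, μ i * a i j : ℝ) : ℂ) := by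
      rw [hexp, inner_sum, Complex.ofReal_sum]
      refine Finset.sum_congr rfl fun i _ => ?_
      rw [inner_smul_right, inner_smul_right,
        mul_comm ⟪e i, τ j⟫_ℂ ⟪τ j, e i⟫_ℂ]
      rw [hprod (τ j) (e i)]
      norm_cast
    have := h1.symm.trans h2
    exact_mod_cast this
  have hT2 : ∑ j, ∑ k, ‖⟪τ j, τ k⟫_ℂ‖ ^ 2 = ∑ i, μ i ^ 2 := by
    calc ∑ j, ∑ k, ‖⟪τ j, τ k⟫_ℂ‖ ^ 2 = ∑ j, ∑ i, μ i * a i j :=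
          Finset.sum_congr rfl fun j _ => hC j
      _ = ∑ i, ∑ j, μ i * a i j := Finset.sum_comm
      _ = ∑ i, μ i ^ 2 := by
          refine Finset.sum_congr rfl fun i _ => ?_
          rw [← Finset.mul_sum, ← hA i, sq]
  have htrace : ∑ i, μ i = (n : ℝ) := by
    calc ∑ i, μ i = ∑ i, ∑ j, a i j := Finset.sum_congr rfl fun i _ => hA i
      _ = ∑ j : Fin n, ∑ i, a i j := Finset.sum_comm
      _ = ∑ j : Fin n, (1 : ℝ) := Finset.sum_congr rfl fun j _ => hB j
      _ = n := by simp
  have hd0 : (d : ℝ) ≠ 0 := by positivity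
  have hvar : ∑ i, (μ i - (n : ℝ) / d) ^ 2
      = (∑ i, μ i ^ 2) - (n : ℝ) ^ 2 / d := by
    have expand : ∀ i ∈ Finset.univ, (μ i - (n : ℝ) / d) ^ 2
        = μ i ^ 2 - (2 * ((n : ℝ) / d)) * μ i + ((n : ℝ) / d) ^ 2 := by
      intro i _; ring
    rw [Finset.sum_congr rfl expand, Finset.sum_add_distrib, Finset.sum_sub_distrib,
      ← Finset.mul_sum, htrace, Finset.sum_const, Finset.card_univ, Fintype.card_fin,
      nsmul_eq_mul]
    field_simp
    ring
  constructor
  · have h0 : 0 ≤ ∑ i, (μ i - (n : ℝ) / d) ^ 2 :=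
      Finset.sum_nonneg fun i _ => sq_nonneg _
    rw [hvar] at h0
    rw [hT2]
    linarith
  constructor
  · intro hEq
    rw [hT2] at hEq
    have h0 : ∑ i, (μ i - (n : ℝ) / d) ^ 2 = 0 := by rw [hvar, hEq]; ring
    have hall : ∀ i, μ i = (n : ℝ) / d := by
      intro i
      have h1 := (Finset.sum_eq_zero_iff_of_nonneg
        (fun i _ => sq_nonneg (μ i - (n : ℝ) / d))).mp h0 i (Finset.mem_univ i)
      have h2 := sq_eq_zero_iff.mp h1
      linarith
    refine ⟨(((n : ℝ) / d : ℝ) : ℂ), ?_⟩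
    have hSid : S = ((((n : ℝ) / d : ℝ) : ℂ)) • (LinearMap.id : H →ₗ[ℂ] H) := by
      apply e.toBasis.ext
      intro i
      rw [OrthonormalBasis.coe_toBasis, heig, hall i]
      simp
    intro h
    have := congrArg (fun f => f h) hSid
    simpa [hSapp] using this
  · rintro ⟨c, hc⟩
    have hce : ∀ i, (μ i : ℂ) = c := by
      intro i
      have h1 : S (e i) = c • e i := by rw [hSapp]; exact hc (e i)
      have h2 := (heig i).symm.trans h1
      have hne : e i ≠ 0 := by
        intro h0
        have := e.orthonormal.1 i
        rw [h0] at this; simp at this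
      have h3 : ((μ i : ℂ) - c) • e i = 0 := by rw [sub_smul, h2, sub_self]
      rcases smul_eq_zero.mp h3 with h | h
      · linear_combination h
      · exact absurd h hne
    obtain ⟨i0⟩ : Nonempty (Fin d) := ⟨⟨0, hd1⟩⟩
    have hμeq : ∀ i, μ i = μ i0 := by
      intro i
      have : (μ i : ℂ) = (μ i0 : ℂ) := (hce i).trans (hce i0).symm
      exact_mod_cast this
    have hsum : (d : ℝ) * μ i0 = n := by
      rw [← htrace, Finset.sum_congr rfl fun i _ => hμeq i, Finset.sum_const,
        Finset.card_univ, Fintype.card_fin, nsmul_eq_mul]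
    have hμ0 : μ i0 = (n : ℝ) / d := by
      rw [eq_div_iff hd0]; linarith
    have hfin : ∑ i, μ i ^ 2 = d * ((n : ℝ) / d) ^ 2 := by
      rw [Finset.sum_congr rfl fun i _ => by rw [hμeq i, hμ0], Finset.sum_const,
        Finset.card_univ, Fintype.card_fin, nsmul_eq_mul]
    rw [hT2, hfin]
    field_simp
end
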